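/- Let λ be a partition of n with variables f_{i,j} and Wronskian coefficients r_s as in the standard setup. Then for every variable f_{i,j}, the linear monomial f_{i,j} occurs with nonzero coefficient in r_j (the coefficient of u^{n−j} in Wr(f_1,…,f_n)). -/

import Mathlib

/-- `d_i = λ_i + n − i`, with rows indexed by `i : Fin n` (so `i` stands for row `i+1`). -/
def dSeq (n : ℕ) (lam : Fin n → ℕ) (i : Fin n) : ℕ := lam i + (n - 1 - (i : ℕ))

/-- `P = {d_1, …, d_n}`. -/
def dSet (n : ℕ) (lam : Fin n → ℕ) : Finset ℕ := Finset.image (dSeq n lam) Finset.univ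

/-- `f_i = u^{d_i} + Σ_{j : 1 ≤ j ≤ d_i, d_i−j ∉ P} f_{i,j} u^{d_i−j}`, a polynomial in `u`
over the polynomial ring `ℂ[f_{i,j}]` (the variable `f_{i,j}` is `MvPolynomial.X (i,j)`). -/
noncomputable def rowPoly (n : ℕ) (lam : Fin n → ℕ) (i : Fin n) :
    Polynomial (MvPolynomial (Fin n × ℕ) ℂ) :=
  Polynomial.X ^ (dSeq n lam i) +
    ∑ j ∈ (Finset.Icc 1 (dSeq n lam i)).filter (fun j => dSeq n lam i - j ∉ dSet n lam),
      Polynomial.C (MvPolynomial.X (i, j)) * Polynomial.X ^ (dSeq n lam i - j)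

/-- The Wronskian `Wr(f_1,…,f_n)`. -/
noncomputable def wronskianPoly (n : ℕ) (lam : Fin n → ℕ) :
    Polynomial (MvPolynomial (Fin n × ℕ) ℂ) :=
  Matrix.det (Matrix.of fun a b : Fin n => Polynomial.derivative^[(a : ℕ)] (rowPoly n lam b))

/-- `r_s`: the coefficient of `u^{n−s}` in `Wr(f_1,…,f_n)`. -/
noncomputable def rCoeff (n : ℕ) (lam : Fin n → ℕ) (s : ℕ) : MvPolynomial (Fin n × ℕ) ℂ :=
  (wronskianPoly n lam).coeff (n - s)

open Polynomial Matrix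

/-- Core lemma B: determinant of the descFactorial matrix is nonzero for injective exponents. -/
lemma det_descFactorial_ne_zero {n : ℕ} (e : Fin n → ℕ) (he : Function.Injective e) :
    Matrix.det (Matrix.of fun a b : Fin n => ((e b).descFactorial (a : ℕ) : ℂ)) ≠ 0 := by
  have h := Matrix.det_eval_matrixOfPolynomials_eq_det_vandermonde
    (fun b : Fin n => ((e b : ℂ))) (fun a : Fin n => descPochhammer ℂ (a : ℕ))
    (fun a => descPochhammer_natDegree (R := ℂ) (a:ℕ))
    (fun a => monic_descPochhammer _ _)
  have h2 : Matrix.det (Matrix.of fun a b : Fin n => ((e b).descFactorial (a : ℕ) : ℂ))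
      = (Matrix.vandermonde (fun b : Fin n => ((e b : ℂ)))).det := by
    rw [h, ← Matrix.det_transpose]
    congr 1
    ext a b
    simp [Matrix.transpose_apply, descPochhammer_eval_eq_descFactorial]
  rw [h2]
  rw [Matrix.det_vandermonde_ne_zero_iff]
  intro a b hab
  exact he (Nat.cast_injective hab)

/-- Core lemma A: a coefficient of the determinant of the Wronskian matrix of pure powers. -/
lemma coeff_det_pow {n N : ℕ} (e : Fin n → ℕ)
    (hN : ∀ σ : Equiv.Perm (Fin n), (∀ b, ((σ b : ℕ)) ≤ e b) →
      (∑ b : Fin n, (e b - (σ b : ℕ))) = N) :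
    (Matrix.det (Matrix.of fun a b : Fin n =>
        (Polynomial.derivative^[(a : ℕ)] (Polynomial.X ^ (e b)) : Polynomial ℂ))).coeff N =
    Matrix.det (Matrix.of fun a b : Fin n => ((e b).descFactorial (a : ℕ) : ℂ)) := by
  rw [Matrix.det_apply', Matrix.det_apply', Polynomial.finset_sum_coeff]
  refine Finset.sum_congr rfl fun σ _ => ?_
  rw [← Polynomial.C_eq_intCast, Polynomial.coeff_C_mul]
  congr 1
  have hentry : ∀ b : Fin n, (Matrix.of fun a b : Fin n =>
        (Polynomial.derivative^[(a : ℕ)] (Polynomial.X ^ (e b)) : Polynomial ℂ)) (σ b) b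
      = Polynomial.C (((e b).descFactorial ((σ b : ℕ)) : ℂ)) *
          Polynomial.X ^ (e b - (σ b : ℕ)) := by
    intro b
    simp [Polynomial.iterate_derivative_X_pow_eq_C_mul]
  calc (∏ b : Fin n, (Matrix.of fun a b : Fin n =>
        (Polynomial.derivative^[(a : ℕ)] (Polynomial.X ^ (e b)) : Polynomial ℂ)) (σ b) b).coeff N
      = (Polynomial.C (∏ b : Fin n, (((e b).descFactorial ((σ b : ℕ)) : ℂ))) *
          Polynomial.X ^ (∑ b : Fin n, (e b - (σ b : ℕ)))).coeff N := by
        rw [Finset.prod_congr rfl (fun b _ => hentry b), Finset.prod_mul_distrib,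
          ← map_prod, Finset.prod_pow_eq_pow_sum]
    _ = ∏ b : Fin n, (((e b).descFactorial ((σ b : ℕ)) : ℂ)) := by
        by_cases hle : ∀ b, ((σ b : ℕ)) ≤ e b
        · rw [hN σ hle, Polynomial.coeff_C_mul, Polynomial.coeff_X_pow]
          simp
        · push_neg at hle
          obtain ⟨b, hb⟩ := hle
          have hz : (((e b).descFactorial ((σ b : ℕ)) : ℂ)) = 0 := by
            rw [Nat.descFactorial_eq_zero_iff_lt.mpr hb, Nat.cast_zero]
          rw [Finset.prod_eq_zero (Finset.mem_univ b) hz]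
          simp

/-- Extracting the coefficient of a linear monomial via a substitution into `ℂ[t]`. -/
lemma coeff_single_one_eq {τ : Type*} [DecidableEq τ] (v : τ) (p : MvPolynomial τ ℂ) :
    (MvPolynomial.aeval (fun w => if w = v then (Polynomial.X : Polynomial ℂ) else 0) p).coeff 1
      = MvPolynomial.coeff (Finsupp.single v 1) p := by
  induction p using MvPolynomial.induction_on' with
  | monomial u c =>
    rw [MvPolynomial.aeval_monomial, MvPolynomial.coeff_monomial]
    by_cases hsupp : u.support ⊆ {v}
    · rw [Finsupp.support_subset_singleton] at hsupp
      rw [hsupp]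
      rcases eq_or_ne (u v) 0 with h0 | h0
      · rw [h0, Finsupp.single_zero, Finsupp.prod_zero_index, mul_one,
          if_neg (fun h => by simpa using DFunLike.congr_fun h v)]
        simp [Polynomial.algebraMap_eq, Polynomial.coeff_C]
      · rw [Finsupp.prod_single_index (by simp)]
        rcases eq_or_ne (u v) 1 with h1 | h1
        · rw [h1, if_pos rfl, pow_one]
          simp [Polynomial.algebraMap_eq, Polynomial.coeff_C_mul]
        · have hne : Finsupp.single v (u v) ≠ Finsupp.single v 1 := by
            intro h
            exact h1 (by simpa using DFunLike.congr_fun h v)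
          rw [if_neg hne, if_pos rfl]
          simp [Polynomial.algebraMap_eq, Polynomial.coeff_C_mul, Polynomial.coeff_X_pow, Ne.symm h1]
    · obtain ⟨x, hx, hxv⟩ := Finset.not_subset.mp hsupp
      have hxv' : x ≠ v := by simpa using hxv
      have hzero : (u.prod fun w k => (if w = v then (Polynomial.X : Polynomial ℂ) else 0) ^ k) = 0 := by
        apply Finset.prod_eq_zero hx
        simp [hxv', zero_pow (Finsupp.mem_support_iff.mp hx)]
      rw [hzero, mul_zero]
      have hne : u ≠ Finsupp.single v 1 := by
        intro h
        rw [h] at hx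
        exact hxv (Finsupp.support_single_subset hx)
      rw [if_neg hne]
      simp
  | add p q hp hq => rw [map_add, Polynomial.coeff_add, hp, hq, MvPolynomial.coeff_add]

/-- Proposition: every variable `f_{i,j}` occurs, as a linear monomial with nonzero
coefficient, in the Wronskian coefficient `r_j`. -/
theorem linear_term_occurs_in_rCoeff (n : ℕ) (lam : Fin n → ℕ)
    (hanti : Antitone lam) (hsum : ∑ i, lam i = n)
    (i : Fin n) (j : ℕ) (hj1 : 1 ≤ j) (hj2 : j ≤ dSeq n lam i)
    (hjP : dSeq n lam i - j ∉ dSet n lam) :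
    MvPolynomial.coeff (Finsupp.single (i, j) 1) (rCoeff n lam j) ≠ 0 := by
  classical
  set d : Fin n → ℕ := dSeq n lam with hd
  set e1 : Fin n → ℕ := Function.update d i (d i - j) with he1
  -- basic facts about d
  have hdmono : ∀ b c : Fin n, b < c → d c < d b := by
    intro b c hbc
    have h1 : lam c ≤ lam b := hanti (le_of_lt hbc)
    have h2 : (b : ℕ) < (c : ℕ) := hbc
    have h3 : (c : ℕ) < n := c.is_lt
    simp only [hd, dSeq]
    omega
  have hdinj : Function.Injective d := by
    intro b c h
    rcases lt_trichotomy b c with hlt | heq | hgt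
    · exact absurd h (by have := hdmono b c hlt; omega)
    · exact heq
    · exact absurd h (by have := hdmono c b hgt; omega)
  have hinj : Function.Injective e1 := by
    intro b c h
    by_cases hb : b = i <;> by_cases hc : c = i
    · rw [hb, hc]
    · exfalso
      rw [he1] at h
      rw [hb, Function.update_self, Function.update_of_ne hc] at h
      exact hjP (h ▸ Finset.mem_image_of_mem d (Finset.mem_univ c))
    · exfalso
      rw [he1] at h
      rw [hc, Function.update_self, Function.update_of_ne hb] at h
      exact hjP (h ▸ Finset.mem_image_of_mem d (Finset.mem_univ b))
    · rw [he1, Function.update_of_ne hb, Function.update_of_ne hc] at h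
      exact hdinj h
  -- sum facts
  have hsd : ∑ b : Fin n, d b = n + ∑ b : Fin n, (b : ℕ) := by
    have h1 : ∑ b : Fin n, d b = (∑ b : Fin n, lam b) + ∑ b : Fin n, (n - 1 - (b : ℕ)) := by
      rw [← Finset.sum_add_distrib]
      rfl
    have h2 : ∑ b : Fin n, (n - 1 - (b : ℕ)) = ∑ b : Fin n, (b : ℕ) := by
      rw [Fin.sum_univ_eq_sum_range (fun k => n - 1 - k), Fin.sum_univ_eq_sum_range (fun k => k)]
      exact Finset.sum_range_reflect (fun k => k) n
    rw [h1, h2, hsum]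
  have hse1 : (∑ b : Fin n, e1 b) + j = ∑ b : Fin n, d b := by
    rw [he1, Finset.sum_update_of_mem (Finset.mem_univ i)]
    have hD : ∑ b : Fin n, d b = (∑ b ∈ Finset.univ \ {i}, d b) + d i :=
      Finset.sum_eq_sum_sdiff_singleton_add (Finset.mem_univ i) d
    omega
  have hN : ∀ σ : Equiv.Perm (Fin n), (∀ b, ((σ b : ℕ)) ≤ e1 b) →
      (∑ b : Fin n, (e1 b - (σ b : ℕ))) = n - j := by
    intro σ hσ
    have hsub : ∑ b : Fin n, (e1 b - (σ b : ℕ))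
        = (∑ b : Fin n, e1 b) - ∑ b : Fin n, ((σ b : ℕ)) :=
      Finset.sum_tsub_distrib _ (fun b _ => hσ b)
    have hperm : ∑ b : Fin n, ((σ b : ℕ)) = ∑ b : Fin n, (b : ℕ) :=
      Equiv.sum_comp σ (fun b => (b : ℕ))
    have hle : ∑ b : Fin n, ((σ b : ℕ)) ≤ ∑ b : Fin n, e1 b :=
      Finset.sum_le_sum (fun b _ => hσ b)
    omega
  -- the substitution
  rw [← coeff_single_one_eq]
  set φ : MvPolynomial (Fin n × ℕ) ℂ →+* Polynomial ℂ :=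
    (MvPolynomial.aeval (fun w => if w = ((i : Fin n), j) then (Polynomial.X : Polynomial ℂ) else 0)).toRingHom with hφ
  have hmap : (MvPolynomial.aeval
        (fun w => if w = ((i : Fin n), j) then (Polynomial.X : Polynomial ℂ) else 0))
        (rCoeff n lam j)
      = (Polynomial.map φ (wronskianPoly n lam)).coeff (n - j) := by
    rw [rCoeff, Polynomial.coeff_map]
    rfl
  rw [hmap]
  -- compute the mapped row polynomials
  have hrow : ∀ b : Fin n, Polynomial.map φ (rowPoly n lam b)
      = X ^ d b + (if b = i then Polynomial.C (Polynomial.X : Polynomial ℂ) * X ^ (d i - j) else 0) := by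
    intro b
    rw [rowPoly, Polynomial.map_add, Polynomial.map_pow, Polynomial.map_X, Polynomial.map_sum]
    congr 1
    have hterm : ∀ j' ∈ (Finset.Icc 1 (d b)).filter (fun j' => d b - j' ∉ dSet n lam),
        Polynomial.map φ (Polynomial.C (MvPolynomial.X (b, j')) * X ^ (d b - j'))
          = if (b, j') = (i, j) then Polynomial.C (Polynomial.X : Polynomial ℂ) * X ^ (d b - j') else 0 := by
      intro j' _
      rw [Polynomial.map_mul, Polynomial.map_C, Polynomial.map_pow, Polynomial.map_X]
      have : φ (MvPolynomial.X (b, j'))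
          = if (b, j') = (i, j) then (Polynomial.X : Polynomial ℂ) else 0 := by
        rw [hφ]; simp [MvPolynomial.aeval_X]
      rw [this]
      split_ifs with h
      · rfl
      · simp
    rw [Finset.sum_congr rfl hterm]
    by_cases hb : b = i
    · subst hb
      rw [if_pos rfl]
      have hmem : j ∈ (Finset.Icc 1 (d b)).filter (fun j' => d b - j' ∉ dSet n lam) := by
        rw [Finset.mem_filter, Finset.mem_Icc]
        exact ⟨⟨hj1, hj2⟩, hjP⟩
      have : ∀ j' ∈ (Finset.Icc 1 (d b)).filter (fun j' => d b - j' ∉ dSet n lam),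
          (if ((b : Fin n), j') = (b, j) then Polynomial.C (Polynomial.X : Polynomial ℂ) * X ^ (d b - j') else 0)
            = if j' = j then Polynomial.C (Polynomial.X : Polynomial ℂ) * X ^ (d b - j') else 0 := by
        intro j' _
        simp [Prod.ext_iff]
      rw [Finset.sum_congr rfl this, Finset.sum_ite_eq' _ j
        (fun j' => Polynomial.C (Polynomial.X : Polynomial ℂ) * X ^ (d b - j')), if_pos hmem]
    · rw [if_neg hb]
      apply Finset.sum_eq_zero
      intro j' _
      rw [if_neg (by simp [Prod.ext_iff, hb])]
  -- the mapped wronskian as a determinant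
  have hdet : Polynomial.map φ (wronskianPoly n lam)
      = Matrix.det (Matrix.of fun a b : Fin n => Polynomial.derivative^[(a : ℕ)]
          (X ^ d b + (if b = i then Polynomial.C (Polynomial.X : Polynomial ℂ) * X ^ (d i - j) else 0))) := by
    rw [wronskianPoly, ← Polynomial.coe_mapRingHom, RingHom.map_det]
    congr 1
    ext a b : 2
    rw [RingHom.mapMatrix_apply, Matrix.map_apply]
    simp only [Matrix.of_apply, Polynomial.coe_mapRingHom]
    rw [← Polynomial.iterate_derivative_map, hrow b]
  rw [hdet]
  have hIter : ∀ (k : ℕ) (p q : Polynomial (Polynomial ℂ)),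
      Polynomial.derivative^[k] (p + q)
        = Polynomial.derivative^[k] p + Polynomial.derivative^[k] q := by
    intro k
    induction k with
    | zero => intro p q; simp
    | succ k ih =>
      intro p q
      rw [Function.iterate_succ_apply, Polynomial.derivative_add, ih,
        ← Function.iterate_succ_apply, ← Function.iterate_succ_apply]
  -- split the determinant by linearity in column i
  set P0 : Matrix (Fin n) (Fin n) (Polynomial (Polynomial ℂ)) :=
    Matrix.of fun a b : Fin n => Polynomial.derivative^[(a : ℕ)] (X ^ d b) with hP0
  set P1 : Matrix (Fin n) (Fin n) (Polynomial (Polynomial ℂ)) :=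
    Matrix.of fun a b : Fin n => Polynomial.derivative^[(a : ℕ)] (X ^ e1 b) with hP1
  have hM : (Matrix.of fun a b : Fin n => Polynomial.derivative^[(a : ℕ)]
        (X ^ d b + (if b = i then Polynomial.C (Polynomial.X : Polynomial ℂ) * X ^ (d i - j) else 0)))
      = P0.updateCol i ((fun a : Fin n => Polynomial.derivative^[(a : ℕ)] (X ^ d i))
          + Polynomial.C (Polynomial.X : Polynomial ℂ) •
            (fun a : Fin n => Polynomial.derivative^[(a : ℕ)] (X ^ (d i - j)))) := by
    ext a b : 2
    rw [Matrix.updateCol_apply]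
    by_cases hb : b = i
    · subst hb
      rw [if_pos rfl, Matrix.of_apply, if_pos rfl, hIter, Pi.add_apply, Pi.smul_apply,
        smul_eq_mul, Polynomial.iterate_derivative_C_mul]
    · rw [if_neg hb, Matrix.of_apply, if_neg hb, add_zero, hP0, Matrix.of_apply]
  rw [hM, Matrix.det_updateCol_add, Matrix.det_updateCol_smul]
  have hcol0 : P0.updateCol i (fun a : Fin n => Polynomial.derivative^[(a : ℕ)] (X ^ d i)) = P0 :=
    Matrix.updateCol_eq_self P0 i
  have hcol1 : P0.updateCol i (fun a : Fin n => Polynomial.derivative^[(a : ℕ)] (X ^ (d i - j))) = P1 := by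
    ext a b : 2
    rw [Matrix.updateCol_apply]
    by_cases hb : b = i
    · subst hb
      rw [if_pos rfl, hP1, Matrix.of_apply, he1, Function.update_self]
    · rw [if_neg hb, hP0, Matrix.of_apply, hP1, Matrix.of_apply, he1, Function.update_of_ne hb]
  rw [hcol0, hcol1]
  -- factor the power determinants through ℂ
  have hfac : ∀ ee : Fin n → ℕ,
      (Matrix.of fun a b : Fin n =>
          (Polynomial.derivative^[(a : ℕ)] (X ^ ee b) : Polynomial (Polynomial ℂ))).det
        = Polynomial.map (Polynomial.C : ℂ →+* Polynomial ℂ)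
            ((Matrix.of fun a b : Fin n =>
              (Polynomial.derivative^[(a : ℕ)] (X ^ ee b) : Polynomial ℂ)).det) := by
    intro ee
    rw [← Polynomial.coe_mapRingHom, RingHom.map_det]
    congr 1
    ext a b : 2
    rw [RingHom.mapMatrix_apply, Matrix.map_apply]
    simp only [Matrix.of_apply, Polynomial.coe_mapRingHom]
    rw [← Polynomial.iterate_derivative_map, Polynomial.map_pow, Polynomial.map_X]
  rw [hP0, hP1, hfac d, hfac e1]
  -- extract the coefficient
  rw [Polynomial.coeff_add, Polynomial.coeff_C_mul, Polynomial.coeff_map, Polynomial.coeff_map,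
    Polynomial.coeff_add]
  rw [coeff_det_pow e1 hN]
  have hzero1 : (Polynomial.C (((Matrix.of fun a b : Fin n =>
      (Polynomial.derivative^[(a : ℕ)] (X ^ d b) : Polynomial ℂ)).det).coeff (n - j))).coeff 1 = 0 := by
    rw [Polynomial.coeff_C]
    simp
  rw [hzero1, zero_add, Polynomial.coeff_X_mul, Polynomial.coeff_C]
  simpa using det_descFactorial_ne_zero e1 hinj
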